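/- Let α > 2, b > 0, and z_0 > 0 satisfy z_0^α < b. Then ∫_{z_0}^∞ ( 1 − 1/(1 + b·z^{−α}) ) · z dz = ( π / ( α · sin(2π/α) ) ) · b^{2/α} − (z_0^2 / 2) · ₂F₁( 1, 2/α ; 1 + 2/α ; −z_0^α / b ), where ₂F₁ is the Gauss hypergeometric function. -/

import Mathlib

open MeasureTheory Real
open Set

/-- The Gauss (ordinary) hypergeometric function `₂F₁(a, b; c; z)` for real
arguments, defined for `|z| < 1` by its power series
`Σ_{n≥0} ((a)_n (b)_n / (c)_n) zⁿ / n!`, where `(x)_n` is the rising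
(ascending Pochhammer) factorial. -/
noncomputable def hyp2F1 (a b c z : ℝ) : ℝ :=
  ∑' n : ℕ,
    (ascPochhammer ℝ n).eval a * (ascPochhammer ℝ n).eval b /
      (ascPochhammer ℝ n).eval c * z ^ n / (Nat.factorial n)


lemma real_beta {s : ℝ} (h0 : 0 < s) (h1 : s < 1) :
    ∫ x in Set.Ioo (0:ℝ) 1, x ^ (s - 1) * (1 - x) ^ (-s)
      = Real.Gamma s * Real.Gamma (1 - s) := by
  have hs : 0 < Complex.re (s : ℂ) := by simpa using h0
  have ht : 0 < Complex.re (1 - (s : ℂ)) := by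
    simp only [Complex.sub_re, Complex.one_re, Complex.ofReal_re]; linarith
  have key := Complex.Gamma_mul_Gamma_eq_betaIntegral hs ht
  rw [show (s:ℂ) + (1 - s) = 1 by ring, Complex.Gamma_one, one_mul] at key
  have hB : Complex.betaIntegral s (1 - s)
      = ((∫ x in Set.Ioo (0:ℝ) 1, x ^ (s - 1) * (1 - x) ^ (-s) : ℝ) : ℂ) := by
    rw [Complex.betaIntegral, intervalIntegral.integral_of_le zero_le_one,
      MeasureTheory.integral_Ioc_eq_integral_Ioo]
    have : ∀ x ∈ Set.Ioo (0:ℝ) 1, (x:ℂ) ^ ((s:ℂ) - 1) * (1 - (x:ℂ)) ^ (1 - (s:ℂ) - 1)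
        = ((x ^ (s - 1) * (1 - x) ^ (-s) : ℝ) : ℂ) := by
      intro x hx
      obtain ⟨hx0, hx1⟩ := hx
      rw [Complex.ofReal_mul, Complex.ofReal_cpow hx0.le, Complex.ofReal_cpow (by linarith : (0:ℝ) ≤ 1 - x)]
      push_cast
      ring_nf
    rw [setIntegral_congr_fun measurableSet_Ioo this]
    exact integral_ofReal
  rw [hB, show ((1:ℂ) - s) = ((1-s:ℝ):ℂ) by push_cast; ring,
    Complex.Gamma_ofReal, Complex.Gamma_ofReal, ← Complex.ofReal_mul] at key
  exact_mod_cast key.symm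

lemma beta_Ioi {s : ℝ} (h0 : 0 < s) (h1 : s < 1) :
    ∫ t in Set.Ioi (0:ℝ), t ^ (s - 1) / (1 + t) = π / Real.sin (π * s) := by
  have hderiv : ∀ t ∈ Set.Ioi (0:ℝ),
      HasDerivWithinAt (fun t : ℝ => t / (1 + t)) (((1+t)^2)⁻¹) (Set.Ioi 0) t := by
    intro t ht
    have hu : (0:ℝ) < 1 + t := by simp at ht; linarith
    have := (hasDerivAt_id t).div ((hasDerivAt_id t).const_add 1) hu.ne'
    have e : (1 * (1 + id t) - id t * 1) / (1 + id t) ^ 2 = ((1 + t) ^ 2)⁻¹ := by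
      simp only [id]; ring
    rw [e] at this
    exact this.hasDerivWithinAt
  have hinj : Set.InjOn (fun t : ℝ => t / (1 + t)) (Set.Ioi 0) := by
    intro a ha b hb hab
    simp only [Set.mem_Ioi] at ha hb
    have ha' : (0:ℝ) < 1 + a := by linarith
    have hb' : (0:ℝ) < 1 + b := by linarith
    field_simp at hab
    nlinarith
  have himg : (fun t : ℝ => t / (1 + t)) '' Set.Ioi 0 = Set.Ioo 0 1 := by
    ext x
    constructor
    · rintro ⟨t, ht, rfl⟩
      simp only [Set.mem_Ioi] at ht
      have hu : (0:ℝ) < 1 + t := by linarith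
      exact ⟨div_pos ht hu, (div_lt_one hu).mpr (by linarith)⟩
    · rintro ⟨hx0, hx1⟩
      have h1x : (0:ℝ) < 1 - x := by linarith
      refine ⟨x / (1 - x), Set.mem_Ioi.mpr (by positivity), ?_⟩
      field_simp
      ring
  have key := integral_image_eq_integral_abs_deriv_smul measurableSet_Ioi hderiv hinj
    (fun x => x ^ (s - 1) * (1 - x) ^ (-s))
  rw [himg, real_beta h0 h1, Real.Gamma_mul_Gamma_one_sub] at key
  rw [key]
  refine Eq.symm ?_
  refine setIntegral_congr_fun measurableSet_Ioi (fun t ht => ?_)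
  simp only [Set.mem_Ioi] at ht
  have hu : (0:ℝ) < 1 + t := by linarith
  have h1 : 1 - t / (1 + t) = (1 + t)⁻¹ := by field_simp; ring
  have h2 : (t / (1 + t)) ^ (s - 1) = t ^ (s - 1) * (1 + t) ^ (-(s-1)) := by
    rw [div_rpow ht.le hu.le, Real.rpow_neg hu.le, div_eq_mul_inv]
  have h3 : ((1 + t)⁻¹ : ℝ) ^ (-s) = (1 + t) ^ s := by
    rw [Real.inv_rpow hu.le, ← Real.rpow_neg hu.le, neg_neg]
  have h4 : (((1+t)^2)⁻¹ : ℝ) = (1 + t) ^ (-2:ℝ) := by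
    rw [← Real.rpow_natCast (1+t) 2, ← Real.rpow_neg hu.le]
    norm_num
  rw [smul_eq_mul, abs_of_pos (by positivity), h1, h2, h3, h4]
  rw [show (1+t)^(-2:ℝ) * (t ^ (s-1) * (1+t) ^ (-(s-1)) * (1+t) ^ s)
      = t ^ (s-1) * ((1+t) ^ (-(s-1)) * (1+t) ^ s * (1+t)^(-2:ℝ)) by ring,
    ← Real.rpow_add hu, ← Real.rpow_add hu, show -(s-1) + s + -2 = (-1:ℝ) by ring,
    Real.rpow_neg_one, div_eq_mul_inv]

lemma int_Ioi_eq {α b : ℝ} (hα : 2 < α) (hb : 0 < b) :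
    ∫ z in Set.Ioi (0:ℝ), z / (z ^ α + b)
      = b ^ (2/α - 1) * π / (α * Real.sin (2 * π / α)) := by
  have hα0 : (0:ℝ) < α := by linarith
  set s : ℝ := 2/α with hs
  have hs0 : 0 < s := by positivity
  have hs1 : s < 1 := by rw [hs, div_lt_one hα0]; linarith
  have step2 : ∫ y in Set.Ioi (0:ℝ), y ^ (s-1) / (y + b)
      = b ^ (s-1) * (π / Real.sin (π * s)) := by
    have h := integral_comp_mul_left_Ioi (fun y => y ^ (s-1) / (y + b)) 0 hb
    rw [mul_zero] at h
    have congr1 : ∫ x in Set.Ioi (0:ℝ), (b*x) ^ (s-1) / (b*x + b)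
        = ∫ x in Set.Ioi (0:ℝ), b ^ (s-2) * (x ^ (s-1) / (1 + x)) := by
      refine setIntegral_congr_fun measurableSet_Ioi (fun x hx => ?_)
      simp only [Set.mem_Ioi] at hx
      rw [Real.mul_rpow hb.le hx.le, show b*x+b = b*(1+x) by ring, mul_div_mul_comm]
      congr 1
      rw [div_eq_mul_inv, ← Real.rpow_neg_one b, ← Real.rpow_add hb]
      ring_nf
    rw [congr1, MeasureTheory.integral_const_mul, beta_Ioi hs0 hs1, smul_eq_mul] at h
    have hb' : b ≠ 0 := hb.ne'
    have : b * (b ^ (s-2) * (π / Real.sin (π * s))) = b ^ (s-1) * (π / Real.sin (π * s)) := by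
      rw [show s-1 = 1+(s-2) by ring, Real.rpow_add hb, Real.rpow_one, mul_assoc]
    rw [← this, h]
    field_simp
  have h1 := integral_comp_rpow_Ioi_of_pos
    (g := fun y => (1/α) * (y ^ (s-1) / (y + b))) hα0
  have congr2 : ∫ x in Set.Ioi (0:ℝ),
        (α * x ^ (α-1)) • ((1/α) * ((x^α) ^ (s-1) / (x^α + b)))
      = ∫ x in Set.Ioi (0:ℝ), x / (x ^ α + b) := by
    refine setIntegral_congr_fun measurableSet_Ioi (fun x hx => ?_)
    simp only [Set.mem_Ioi] at hx
    rw [smul_eq_mul, ← Real.rpow_mul hx.le, show α * (s-1) = 2 - α by rw [hs]; field_simp]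
    rw [show α * x^(α-1) * (1/α * (x^(2-α)/(x^α+b)))
        = x^(α-1) * x^(2-α) / (x^α+b) * (α * (1/α)) by ring,
      mul_one_div, div_self hα0.ne', mul_one, ← Real.rpow_add hx,
      show α - 1 + (2 - α) = (1:ℝ) by ring, Real.rpow_one]
  rw [congr2] at h1
  rw [h1, MeasureTheory.integral_const_mul, step2]
  have hπs : π * s = 2 * π / α := by rw [hs]; ring
  rw [hπs]
  field_simp


lemma poch_pos {x : ℝ} (hx : 0 < x) : ∀ n : ℕ, 0 < (ascPochhammer ℝ n).eval x := by
  intro n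
  induction n with
  | zero => simp
  | succ m ih =>
    rw [ascPochhammer_succ_right]
    simp only [Polynomial.eval_mul, Polynomial.eval_add, Polynomial.eval_X,
      Polynomial.eval_natCast]
    exact mul_pos ih (by positivity)

lemma hyp_eval {c : ℝ} (hc : 0 < c) (x : ℝ) :
    hyp2F1 1 c (1 + c) x = ∑' n : ℕ, c / (c + n) * x ^ n := by
  refine tsum_congr fun n => ?_
  have h1 : (ascPochhammer ℝ n).eval 1 = (Nat.factorial n : ℝ) :=
    ascPochhammer_eval_one ℝ n
  have hP := poch_pos hc n
  have hcn : (0:ℝ) < c + n := by positivity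
  have hsucc : (ascPochhammer ℝ (n+1)).eval c
      = (ascPochhammer ℝ n).eval c * (c + n) := by
    rw [ascPochhammer_succ_right]
    simp
  have hleft : (ascPochhammer ℝ (n+1)).eval c
      = c * (ascPochhammer ℝ n).eval (c + 1) := by
    rw [ascPochhammer_succ_left]
    simp [Polynomial.eval_comp]
  have h1c : (ascPochhammer ℝ n).eval (1 + c)
      = (ascPochhammer ℝ n).eval c * (c + n) / c := by
    rw [add_comm 1 c]
    rw [hsucc] at hleft
    field_simp
    linarith [hleft]
  rw [h1, h1c]
  have hfac : (Nat.factorial n : ℝ) ≠ 0 := Nat.cast_ne_zero.mpr (Nat.factorial_ne_zero n)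
  field_simp

lemma meas_f {α b : ℝ} : Measurable (fun z : ℝ => z / (z ^ α + b)) := by
  fun_prop

lemma integrable_f {α b : ℝ} (hα : 2 < α) (hb : 0 < b) :
    IntegrableOn (fun z : ℝ => z / (z ^ α + b)) (Set.Ioi 0) := by
  have hm : Measurable (fun z : ℝ => z / (z ^ α + b)) := meas_f
  have h1 : IntegrableOn (fun z : ℝ => z / (z ^ α + b)) (Set.Ioc 0 1) := by
    refine Integrable.mono' (integrable_const (1/b)) (hm.aestronglyMeasurable) ?_
    refine (ae_restrict_iff' measurableSet_Ioc).mpr (Filter.Eventually.of_forall fun z hz => ?_)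
    obtain ⟨hz0, hz1⟩ := hz
    have hzα : (0:ℝ) ≤ z ^ α := Real.rpow_nonneg hz0.le α
    rw [Real.norm_of_nonneg (by positivity)]
    rw [div_le_div_iff₀ (by positivity) hb]
    nlinarith
  have h2 : IntegrableOn (fun z : ℝ => z / (z ^ α + b)) (Set.Ioi 1) := by
    refine Integrable.mono' (integrableOn_Ioi_rpow_of_lt (a := 1 - α)
      (by linarith) one_pos) (hm.aestronglyMeasurable) ?_
    refine (ae_restrict_iff' measurableSet_Ioi).mpr (Filter.Eventually.of_forall fun z hz => ?_)
    simp only [Set.mem_Ioi] at hz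
    have hz0 : (0:ℝ) < z := by linarith
    have hzα : (0:ℝ) < z ^ α := Real.rpow_pos_of_pos hz0 α
    rw [Real.norm_of_nonneg (by positivity)]
    have : z ^ (1-α) = z / z ^ α := by
      rw [Real.rpow_sub hz0, Real.rpow_one]
    rw [this]
    apply div_le_div_of_nonneg_left hz0.le hzα
    linarith
  have : Set.Ioi (0:ℝ) = Set.Ioc 0 1 ∪ Set.Ioi 1 := (Set.Ioc_union_Ioi_eq_Ioi zero_le_one).symm
  rw [this]
  exact h1.union h2

lemma int_Ioc_eq {α b z₀ : ℝ} (hα : 2 < α) (hb : 0 < b) (hz₀ : 0 < z₀)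
    (h : z₀ ^ α < b) :
    ∫ z in Set.Ioc (0:ℝ) z₀, z / (z ^ α + b)
      = ∑' n : ℕ, (-1)^n * z₀ ^ (α*n+2) / ((α*n+2) * b^(n+1)) := by
  have hα0 : (0:ℝ) < α := by linarith
  set q : ℝ := z₀ ^ α / b with hq
  have hq0 : 0 ≤ q := by positivity
  have hq1 : q < 1 := by rw [hq, div_lt_one hb]; exact h
  set F : ℕ → ℝ → ℝ := fun n z => (z/b) * (-(z^α/b))^n with hF
  have hFm : ∀ n, Measurable (F n) := by intro n; fun_prop
  -- pointwise bound
  have hbd : ∀ n : ℕ, ∀ z ∈ Set.Ioc (0:ℝ) z₀, ‖F n z‖ ≤ z₀/b * q^n := by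
    intro n z hz
    obtain ⟨hz0, hzz⟩ := hz
    have hzα : z ^ α ≤ z₀ ^ α := Real.rpow_le_rpow hz0.le hzz hα0.le
    have hzα0 : (0:ℝ) ≤ z ^ α := Real.rpow_nonneg hz0.le α
    rw [hF]
    simp only [norm_mul, norm_pow, norm_neg, Real.norm_of_nonneg (by positivity : (0:ℝ) ≤ z/b),
      Real.norm_of_nonneg (by positivity : (0:ℝ) ≤ z^α/b)]
    have h1 : z / b ≤ z₀ / b := by gcongr
    have h2 : (z^α/b)^n ≤ q^n := by gcongr; rw [hq]; gcongr
    exact mul_le_mul h1 h2 (by positivity) (by positivity)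
  have hint : ∀ n : ℕ, Integrable (F n) (volume.restrict (Set.Ioc 0 z₀)) := by
    intro n
    refine Integrable.mono' (integrable_const (z₀/b * q^n)) (hFm n).aestronglyMeasurable ?_
    exact (ae_restrict_iff' measurableSet_Ioc).mpr
      (Filter.Eventually.of_forall fun z hz => hbd n z hz)
  have hvol : (volume (Set.Ioc (0:ℝ) z₀)).toReal = z₀ := by
    rw [Real.volume_Ioc]; simp [ENNReal.toReal_ofReal hz₀.le]
  have hsummable : Summable (fun n => ∫ z in Set.Ioc (0:ℝ) z₀, ‖F n z‖) := by
    refine Summable.of_nonneg_of_le (fun n => integral_nonneg fun z => norm_nonneg _)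
      (fun n => ?_) (((summable_geometric_of_lt_one hq0 hq1).mul_left (z₀/b * z₀)))
    have := norm_setIntegral_le_of_norm_le_const (C := z₀/b * q^n)
      (f := fun z => ‖F n z‖) (μ := volume) (s := Set.Ioc (0:ℝ) z₀)
      (by rw [Real.volume_Ioc]; exact ENNReal.ofReal_lt_top)
      (fun z hz => by rw [norm_norm]; exact hbd n z hz)
    rw [Real.norm_of_nonneg (integral_nonneg fun z => norm_nonneg _), Real.volume_real_Ioc_of_le hz₀.le, sub_zero] at this
    calc ∫ z in Set.Ioc (0:ℝ) z₀, ‖F n z‖ ≤ z₀/b * q^n * z₀ := this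
      _ = z₀/b*z₀ * q^n := by ring
  have key := integral_tsum_of_summable_integral_norm hint hsummable
  -- identify the pointwise sum
  have hptw : ∫ z in Set.Ioc (0:ℝ) z₀, (∑' n, F n z)
      = ∫ z in Set.Ioc (0:ℝ) z₀, z / (z ^ α + b) := by
    refine setIntegral_congr_fun measurableSet_Ioc (fun z hz => ?_)
    obtain ⟨hz0, hzz⟩ := hz
    have hzα0 : (0:ℝ) ≤ z ^ α := Real.rpow_nonneg hz0.le α
    have habs : |(-(z^α/b))| < 1 := by
      rw [abs_neg, abs_of_nonneg (by positivity)]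
      have hmono : z^α ≤ z₀^α := Real.rpow_le_rpow hz0.le hzz hα0.le
      calc z^α/b ≤ q := by rw [hq]; gcongr
        _ < 1 := hq1
    rw [hF]
    simp only
    rw [tsum_mul_left, tsum_geometric_of_abs_lt_one habs, sub_neg_eq_add,
      show (1:ℝ) + z^α/b = (z^α+b)/b by rw [eq_div_iff hb.ne', add_mul, one_mul, div_mul_cancel₀ _ hb.ne', add_comm], inv_div, div_mul_div_comm,
      mul_comm z b, mul_div_mul_left _ _ hb.ne']
  -- compute each integral
  have hterm : ∀ n : ℕ, (∫ z in Set.Ioc (0:ℝ) z₀, F n z)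
      = (-1)^n * z₀ ^ (α*n+2) / ((α*n+2) * b^(n+1)) := by
    intro n
    have hc : ∀ z ∈ Set.Ioc (0:ℝ) z₀, F n z = ((-1)^n / b^(n+1)) * z ^ (α*n+1) := by
      intro z hz
      obtain ⟨hz0, _⟩ := hz
      rw [hF]
      simp only
      rw [neg_pow, div_pow, show z ^ (α*(n:ℝ)+1) = z^(α*(n:ℝ)) * z by
        rw [Real.rpow_add hz0, Real.rpow_one],
        Real.rpow_mul hz0.le, Real.rpow_natCast]
      field_simp
      ring
    rw [setIntegral_congr_fun measurableSet_Ioc hc, MeasureTheory.integral_const_mul,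
      ← intervalIntegral.integral_of_le hz₀.le,
      integral_rpow (Or.inl (lt_of_lt_of_le (by norm_num : (-1:ℝ) < 0)
        (by positivity : (0:ℝ) ≤ α*n+1)))]
    have hexp : α*(n:ℝ)+1+1 = α*n+2 := by ring
    rw [hexp, Real.zero_rpow (by positivity : (0:ℝ) < α*(n:ℝ)+2).ne', sub_zero]
    field_simp
  rw [← hptw, ← key]
  exact tsum_congr hterm


/-- closed form of the function `U` in eq. (22).
Let `α > 2`, `b > 0` and `z₀ > 0` satisfy `z₀^α < b`.  Then
`∫_{z₀}^∞ (1 − 1/(1 + b·z^{−α}))·z dz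
  = (π/(α·sin(2π/α)))·b^{2/α} − (z₀²/2)·₂F₁(1, 2/α; 1 + 2/α; −z₀^α/b)`. -/
theorem stmt_17 (α b z₀ : ℝ) (hα : 2 < α) (hb : 0 < b) (hz₀ : 0 < z₀)
    (h : z₀ ^ α < b) :
    ∫ z in Set.Ioi z₀, (1 - 1 / (1 + b * z ^ (-α))) * z
      = π / (α * Real.sin (2 * π / α)) * b ^ (2 / α)
        - z₀ ^ 2 / 2 * hyp2F1 1 (2 / α) (1 + 2 / α) (-(z₀ ^ α / b)) := by
  have hα0 : (0:ℝ) < α := by linarith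
  set f : ℝ → ℝ := fun z => z / (z ^ α + b) with hf
  have hcongr : ∫ z in Set.Ioi z₀, (1 - 1/(1 + b * z^(-α))) * z
      = ∫ z in Set.Ioi z₀, b * f z := by
    refine setIntegral_congr_fun measurableSet_Ioi fun z hz => ?_
    have hzpos : (0:ℝ) < z := hz₀.trans hz
    have hzα : (0:ℝ) < z^α := Real.rpow_pos_of_pos hzpos α
    rw [hf]
    simp only
    rw [Real.rpow_neg hzpos.le]
    field_simp
    ring
  have hIoi0 : IntegrableOn f (Set.Ioi 0) := integrable_f hα hb
  have hint1 : IntegrableOn f (Set.Ioc 0 z₀) :=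
    hIoi0.mono_set Set.Ioc_subset_Ioi_self
  have hint2 : IntegrableOn f (Set.Ioi z₀) :=
    hIoi0.mono_set (Set.Ioi_subset_Ioi hz₀.le)
  have hsplit : ∫ z in Set.Ioi (0:ℝ), f z
      = (∫ z in Set.Ioc (0:ℝ) z₀, f z) + ∫ z in Set.Ioi z₀, f z := by
    rw [← setIntegral_union Set.Ioc_disjoint_Ioi_same measurableSet_Ioi hint1 hint2,
      Set.Ioc_union_Ioi_eq_Ioi hz₀.le]
  have hIoi : ∫ z in Set.Ioi z₀, f z
      = (∫ z in Set.Ioi (0:ℝ), f z) - ∫ z in Set.Ioc (0:ℝ) z₀, f z := by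
    rw [hsplit]; ring
  rw [hcongr, MeasureTheory.integral_const_mul, hIoi, mul_sub]
  have hA : b * ∫ z in Set.Ioi (0:ℝ), f z = π / (α * Real.sin (2 * π / α)) * b ^ (2/α) := by
    rw [hf, int_Ioi_eq hα hb]
    rw [show b * (b ^ (2/α - 1) * π / (α * Real.sin (2*π/α)))
        = b * b ^ (2/α - 1) * (π / (α * Real.sin (2*π/α))) by ring]
    nth_rewrite 1 [show b = b ^ (1:ℝ) by rw [Real.rpow_one]]
    rw [← Real.rpow_add hb, show (1:ℝ) + (2/α - 1) = 2/α by ring]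
    ring
  have hc : (0:ℝ) < 2/α := by positivity
  have hB : b * ∫ z in Set.Ioc (0:ℝ) z₀, f z
      = z₀ ^ 2 / 2 * hyp2F1 1 (2/α) (1 + 2/α) (-(z₀ ^ α / b)) := by
    rw [hf, int_Ioc_eq hα hb hz₀ h, hyp_eval hc, ← tsum_mul_left, ← tsum_mul_left]
    refine tsum_congr fun n => ?_
    have hbn : (0:ℝ) < b ^ n := by positivity
    have hαn2 : (0:ℝ) < α * n + 2 := by positivity
    have hcn : (0:ℝ) < 2/α + n := by positivity
    have hx : (-(z₀^α/b))^n = (-1)^n * (z₀^α)^n / b^n := by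
      rw [neg_pow, div_pow]; ring
    have hz2 : z₀ ^ (α*(n:ℝ)+2) = (z₀^α)^n * z₀^2 := by
      rw [Real.rpow_add hz₀, Real.rpow_mul hz₀.le, Real.rpow_natCast,
        show (2:ℝ) = ((2:ℕ):ℝ) by norm_num, Real.rpow_natCast]
    rw [hx, hz2, pow_succ]
    field_simp
    ring
  rw [hA, hB]
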